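/- Let a, b be vertices of a temporal graph and let t_α ≤ t_ω. Let S = {t ∈ T_out(a) : t_α ≤ t ≤ t_ω, P(a, b, [t, t_ω]) ≠ ∅}, where T_out(a) = {t : (a, u, t, λ) ∈ 𝒠}. If P(a, b, [t_α, t_ω]) ≠ ∅, then S ≠ ∅ and the minimum duration satisfies: min{dura(P) : P ∈ P(a, b, [t_α, t_ω])} = min{ min{end(P') : P' ∈ P(a, b, [t, t_ω])} − t : t ∈ S }. -/

import Mathlib

/-- Consecutive-edge condition for a temporal path: the head vertex of the next
edge is the tail vertex of the current one, and `t_i + λ_i ≤ t_{i+1}`. -/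
def StepOK {V : Type*} (e f : V × V × ℕ × ℕ) : Prop :=
  e.2.1 = f.1 ∧ e.2.2.1 + e.2.2.2 ≤ f.2.2.1

/-- `P` is a temporal path from `a` to `b` in the temporal graph with
temporal edge set `E`. -/
def IsTempPath {V : Type*} (E : Finset (V × V × ℕ × ℕ)) (a b : V)
    (P : List (V × V × ℕ × ℕ)) : Prop :=
  P ≠ [] ∧ (∀ e ∈ P, e ∈ E) ∧ List.Chain' StepOK P ∧
    (P.head?.map fun e => e.1) = some a ∧ (P.getLast?.map fun e => e.2.1) = some b

/-- The starting time `start(P)` of a (nonempty) temporal path. -/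
def startT {V : Type*} (P : List (V × V × ℕ × ℕ)) : ℕ :=
  (P.head?.map fun e => e.2.2.1).getD 0

/-- The ending time `end(P)` of a (nonempty) temporal path. -/
def endT {V : Type*} (P : List (V × V × ℕ × ℕ)) : ℕ :=
  (P.getLast?.map fun e => e.2.2.1 + e.2.2.2).getD 0

/-- The duration `dura(P) = end(P) - start(P)` of a temporal path. -/
def duraT {V : Type*} (P : List (V × V × ℕ × ℕ)) : ℕ := endT P - startT P

/-- `T_out(a)`: the set of starting times of out-edges of `a`. -/
def Tout {V : Type*} (E : Finset (V × V × ℕ × ℕ)) (a : V) : Set ℕ :=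
  {t | ∃ u l, (a, u, t, l) ∈ E}

lemma start_le_end {V : Type*} (P : List (V × V × ℕ × ℕ)) :
    List.Chain' StepOK P → P ≠ [] → startT P ≤ endT P := by
  induction P with
  | nil => simp
  | cons e l ih =>
    intro hc _
    cases l with
    | nil => simp [startT, endT]
    | cons f l' =>
      obtain ⟨hstep, hc'⟩ := List.isChain_cons_cons.mp hc
      have h2 := ih hc' (by simp)
      have h1 : e.2.2.1 ≤ f.2.2.1 := le_trans (Nat.le_add_right _ _) hstep.2
      have he : endT (e :: f :: l') = endT (f :: l') := by
        simp [endT, List.getLast?_cons_cons]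
      have hs : startT (f :: l') = f.2.2.1 := by simp [startT]
      have hs' : startT (e :: f :: l') = e.2.2.1 := by simp [startT]
      omega

lemma start_mem_Tout {V : Type*} {E : Finset (V × V × ℕ × ℕ)} {a b : V}
    {P : List (V × V × ℕ × ℕ)} (h : IsTempPath E a b P) : startT P ∈ Tout E a := by
  obtain ⟨hne, hE, hc, hh, hl⟩ := h
  cases P with
  | nil => exact absurd rfl hne
  | cons e l =>
    obtain ⟨x, u, t, lam⟩ := e
    simp [List.head?] at hh
    have hmem : (x, u, t, lam) ∈ E := hE _ List.mem_cons_self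
    subst hh
    exact ⟨u, lam, hmem⟩

theorem minimum_duration_correct {V : Type*} (E : Finset (V × V × ℕ × ℕ))
    (a b : V) (ta tw : ℕ) (htatw : ta ≤ tw)
    (hne : ∃ P, IsTempPath E a b P ∧ ta ≤ startT P ∧ endT P ≤ tw) :
    (∃ t, t ∈ Tout E a ∧ ta ≤ t ∧ t ≤ tw ∧
        ∃ P, IsTempPath E a b P ∧ t ≤ startT P ∧ endT P ≤ tw) ∧
    sInf {d | ∃ P, (IsTempPath E a b P ∧ ta ≤ startT P ∧ endT P ≤ tw) ∧ duraT P = d} =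
    sInf {d | ∃ t, (t ∈ Tout E a ∧ ta ≤ t ∧ t ≤ tw ∧
        ∃ P, IsTempPath E a b P ∧ t ≤ startT P ∧ endT P ≤ tw) ∧
      d = sInf {n | ∃ P', (IsTempPath E a b P' ∧ t ≤ startT P' ∧ endT P' ≤ tw) ∧
            endT P' = n} - t} := by
  obtain ⟨P0, hP0, hs0, he0⟩ := hne
  have hse0 : startT P0 ≤ endT P0 := start_le_end _ hP0.2.2.1 hP0.1
  have hSne : ∃ t, t ∈ Tout E a ∧ ta ≤ t ∧ t ≤ tw ∧
      ∃ P, IsTempPath E a b P ∧ t ≤ startT P ∧ endT P ≤ tw :=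
    ⟨startT P0, start_mem_Tout hP0, hs0, le_trans hse0 he0, P0, hP0, le_refl _, he0⟩
  refine ⟨hSne, le_antisymm ?_ ?_⟩
  · -- sInf A ≤ sInf B : show sInf A ≤ sInf B using sInf B ∈ B
    have hBne : {d | ∃ t, (t ∈ Tout E a ∧ ta ≤ t ∧ t ≤ tw ∧
        ∃ P, IsTempPath E a b P ∧ t ≤ startT P ∧ endT P ≤ tw) ∧
        d = sInf {n | ∃ P', (IsTempPath E a b P' ∧ t ≤ startT P' ∧ endT P' ≤ tw) ∧
            endT P' = n} - t}.Nonempty := by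
      obtain ⟨t, ht⟩ := hSne
      exact ⟨_, t, ht, rfl⟩
    obtain ⟨t, ⟨htT, htat, httw, Q, hQ, hsQ, heQ⟩, hd⟩ := Nat.sInf_mem hBne
    have hNne : {n | ∃ P', (IsTempPath E a b P' ∧ t ≤ startT P' ∧ endT P' ≤ tw) ∧
        endT P' = n}.Nonempty := ⟨endT Q, Q, ⟨hQ, hsQ, heQ⟩, rfl⟩
    obtain ⟨P', ⟨hP', hsP', heP'⟩, hend⟩ := Nat.sInf_mem hNne
    rw [hd]
    have hmemA : duraT P' ∈ {d | ∃ P, (IsTempPath E a b P ∧ ta ≤ startT P ∧ endT P ≤ tw)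
        ∧ duraT P = d} := ⟨P', ⟨hP', le_trans htat hsP', heP'⟩, rfl⟩
    have h1 : duraT P' ≤ endT P' - t := by
      have := hsP'
      unfold duraT
      omega
    calc sInf {d | ∃ P, (IsTempPath E a b P ∧ ta ≤ startT P ∧ endT P ≤ tw) ∧ duraT P = d}
        ≤ duraT P' := Nat.sInf_le hmemA
      _ ≤ endT P' - t := h1
      _ = _ := by rw [hend]
  · -- sInf B ≤ sInf A
    have hAne : {d | ∃ P, (IsTempPath E a b P ∧ ta ≤ startT P ∧ endT P ≤ tw) ∧
        duraT P = d}.Nonempty := ⟨duraT P0, P0, ⟨hP0, hs0, he0⟩, rfl⟩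
    obtain ⟨P, ⟨hP, hsP, heP⟩, hd⟩ := Nat.sInf_mem hAne
    set t := startT P with htdef
    have hseP : startT P ≤ endT P := start_le_end _ hP.2.2.1 hP.1
    have hmemB : sInf {n | ∃ P', (IsTempPath E a b P' ∧ t ≤ startT P' ∧ endT P' ≤ tw) ∧
        endT P' = n} - t ∈ {d | ∃ t, (t ∈ Tout E a ∧ ta ≤ t ∧ t ≤ tw ∧
        ∃ P, IsTempPath E a b P ∧ t ≤ startT P ∧ endT P ≤ tw) ∧
        d = sInf {n | ∃ P', (IsTempPath E a b P' ∧ t ≤ startT P' ∧ endT P' ≤ tw) ∧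
            endT P' = n} - t} :=
      ⟨t, ⟨start_mem_Tout hP, hsP, le_trans hseP heP, P, hP, le_refl _, heP⟩, rfl⟩
    have hle : sInf {n | ∃ P', (IsTempPath E a b P' ∧ t ≤ startT P' ∧ endT P' ≤ tw) ∧
        endT P' = n} ≤ endT P := Nat.sInf_le ⟨P, ⟨hP, le_refl _, heP⟩, rfl⟩
    calc sInf {d | ∃ t, (t ∈ Tout E a ∧ ta ≤ t ∧ t ≤ tw ∧
          ∃ P, IsTempPath E a b P ∧ t ≤ startT P ∧ endT P ≤ tw) ∧
          d = sInf {n | ∃ P', (IsTempPath E a b P' ∧ t ≤ startT P' ∧ endT P' ≤ tw) ∧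
            endT P' = n} - t}
        ≤ sInf {n | ∃ P', (IsTempPath E a b P' ∧ t ≤ startT P' ∧ endT P' ≤ tw) ∧
            endT P' = n} - t := Nat.sInf_le hmemB
      _ ≤ endT P - t := Nat.sub_le_sub_right hle t
      _ = duraT P := rfl
      _ = _ := hd
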